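/- Let A1, A2, A3, A4 be points in the plane forming a quadrilateral, and let a line (d) intersect lines A1A2, A2A3, A3A4, A4A1 at points M1, M2, M3, M4 respectively (each distinct from the vertices), and intersect the diagonal line A2A4 at a point M distinct from A2, A4. Then (dist(M1,A1)/dist(M1,A2)) · (dist(M2,A2)/dist(M2,A3)) · (dist(M3,A3)/dist(M3,A4)) · (dist(M4,A4)/dist(M4,A1)) = 1. -/

import Mathlib

open AffineMap
set_option maxHeartbeats 1000000

private lemma param_of_collinear {A B P : EuclideanSpace ℝ (Fin 2)}
    (h : Collinear ℝ ({A, B, P} : Set (EuclideanSpace ℝ (Fin 2)))) (hAB : A ≠ B) :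
    ∃ t : ℝ, P - A = t • (B - A) := by
  have hmem : P ∈ line[ℝ, A, B] :=
    h.mem_affineSpan_of_mem_of_ne (by simp) (by simp) (by simp) hAB
  have h2 : (P - A) +ᵥ A ∈ line[ℝ, A, B] := by
    rw [show (P - A) +ᵥ A = P by simp [vadd_eq_add]]; exact hmem
  rw [vadd_left_mem_affineSpan_pair] at h2
  obtain ⟨r, hr⟩ := h2
  exact ⟨r, by simpa [vsub_eq_sub] using hr.symm⟩

private lemma indep_of_not_collinear {A B C : EuclideanSpace ℝ (Fin 2)}
    (h : ¬ Collinear ℝ ({A, B, C} : Set (EuclideanSpace ℝ (Fin 2))))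
    {x y : ℝ} (hxy : x • (B - A) + y • (C - A) = 0) : x = 0 ∧ y = 0 := by
  by_cases hy : y = 0
  · subst hy
    refine ⟨?_, rfl⟩
    by_contra hx
    have hBA : B - A = 0 := by
      rcases (by simpa using hxy : x = 0 ∨ B - A = 0) with h' | h'
      · exact absurd h' hx
      · exact h'
    have hB : B = A := sub_eq_zero.mp hBA
    exact h (by rw [hB]; simpa using collinear_pair ℝ A C)
  · exfalso
    have hCA : C - A = (y⁻¹ * (-x)) • (B - A) := by
      have h1 : y • (C - A) = (-x) • (B - A) := by
        linear_combination (norm := module) hxy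
      rw [mul_smul, ← h1, inv_smul_smul₀ hy]
    have hmem : C ∈ line[ℝ, A, B] := by
      have h2 := vadd_left_mem_affineSpan_pair (k := ℝ) (p₁ := A) (p₂ := B) (v := C - A)
      rw [show (C - A) +ᵥ A = C by simp [vadd_eq_add]] at h2
      exact h2.mpr ⟨y⁻¹ * (-x), by simpa [vsub_eq_sub] using hCA.symm⟩
    exact h ((collinear_insert_of_mem_affineSpan_pair hmem).subset
      (by intro z hz; simp at hz ⊢; tauto))

private lemma meet_collinear {X Y Z P : EuclideanSpace ℝ (Fin 2)}
    (h1 : Collinear ℝ ({X, Y, P} : Set (EuclideanSpace ℝ (Fin 2))))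
    (h2 : Collinear ℝ ({X, Z, P} : Set (EuclideanSpace ℝ (Fin 2))))
    (hPX : P ≠ X) : Collinear ℝ ({X, Y, Z} : Set (EuclideanSpace ℝ (Fin 2))) := by
  have hY : Y ∈ line[ℝ, X, P] :=
    h1.mem_affineSpan_of_mem_of_ne (by simp) (by simp) (by simp) (Ne.symm hPX)
  have hZ : Z ∈ line[ℝ, X, P] :=
    h2.mem_affineSpan_of_mem_of_ne (by simp) (by simp) (by simp) (Ne.symm hPX)
  exact (collinear_insert_insert_of_mem_affineSpan_pair hY hZ).subset
    (by intro z hz; simp at hz ⊢; tauto)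

private lemma menelaus_triangle (A B C P Q R : EuclideanSpace ℝ (Fin 2))
    (hT : ¬ Collinear ℝ ({A, B, C} : Set (EuclideanSpace ℝ (Fin 2))))
    (hP : Collinear ℝ ({A, B, P} : Set (EuclideanSpace ℝ (Fin 2))))
    (hQ : Collinear ℝ ({B, C, Q} : Set (EuclideanSpace ℝ (Fin 2))))
    (hR : Collinear ℝ ({C, A, R} : Set (EuclideanSpace ℝ (Fin 2))))
    (hPQR : Collinear ℝ ({P, Q, R} : Set (EuclideanSpace ℝ (Fin 2))))
    (hPA : P ≠ A) (hPB : P ≠ B) (hQB : Q ≠ B) (hQC : Q ≠ C)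
    (hRC : R ≠ C) (hRA : R ≠ A) :
    (dist P A / dist P B) * (dist Q B / dist Q C) * (dist R C / dist R A) = 1 := by
  have hAB : A ≠ B := ne₁₂_of_not_collinear hT
  have hAC : A ≠ C := ne₁₃_of_not_collinear hT
  have hBC : B ≠ C := ne₂₃_of_not_collinear hT
  obtain ⟨p, hp⟩ := param_of_collinear hP hAB
  obtain ⟨q, hq⟩ := param_of_collinear hQ hBC
  obtain ⟨r, hr⟩ := param_of_collinear hR (Ne.symm hAC)
  -- hp : P - A = p • (B - A), hq : Q - B = q • (C - B), hr : R - C = r • (A - C)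
  have hp0 : p ≠ 0 := by
    rintro rfl; apply hPA; have := hp; simp at this; exact sub_eq_zero.mp this
  have hq0 : q ≠ 0 := by
    rintro rfl; apply hQB; have := hq; simp at this; exact sub_eq_zero.mp this
  have hr0 : r ≠ 0 := by
    rintro rfl; apply hRC; have := hr; simp at this; exact sub_eq_zero.mp this
  have hp1 : p ≠ 1 := by
    rintro rfl; apply hPB
    have : P - B = 0 := by rw [show P - B = (P - A) - (B - A) by abel, hp, one_smul, sub_self]
    exact sub_eq_zero.mp this
  have hq1 : q ≠ 1 := by
    rintro rfl; apply hQC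
    have : Q - C = 0 := by rw [show Q - C = (Q - B) - (C - B) by abel, hq, one_smul, sub_self]
    exact sub_eq_zero.mp this
  have hr1 : r ≠ 1 := by
    rintro rfl; apply hRA
    have : R - A = 0 := by rw [show R - A = (R - C) - (A - C) by abel, hr, one_smul, sub_self]
    exact sub_eq_zero.mp this
  -- line direction for P, Q, R
  rw [collinear_iff_of_mem (Set.mem_insert P {Q, R})] at hPQR
  obtain ⟨d, hdir⟩ := hPQR
  obtain ⟨s, hs⟩ := hdir Q (by simp)
  obtain ⟨t, ht⟩ := hdir R (by simp)
  have hQP : Q - P = s • d := by rw [hs]; simp [vadd_eq_add]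
  have hRP : R - P = t • d := by rw [ht]; simp [vadd_eq_add]
  -- expansions in basis (B - A), (C - A)
  have hQPb : Q - P = (1 - p - q) • (B - A) + q • (C - A) := by
    have : Q - P = (Q - B) + (B - A) - (P - A) := by abel
    rw [this, hq, hp, show C - B = (C - A) - (B - A) by abel]
    module
  have hRPb : R - P = (-p) • (B - A) + (1 - r) • (C - A) := by
    have : R - P = (R - C) + (C - A) - (P - A) := by abel
    rw [this, hr, hp, show A - C = -(C - A) by abel]
    module
  -- the key relation
  have hkey : t • (Q - P) - s • (R - P) = 0 := by
    rw [hQP, hRP, smul_smul, smul_smul, mul_comm]; abel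
  rw [hQPb, hRPb] at hkey
  have hcomb : (t * (1 - p - q) - s * (-p)) • (B - A) + (t * q - s * (1 - r)) • (C - A) = 0 := by
    rw [← hkey]; module
  obtain ⟨e1, e2⟩ := indep_of_not_collinear hT hcomb
  have ht0 : t ≠ 0 := by
    rintro rfl
    have hRPeq : R = P := by
      have := hRP; simp at this; exact sub_eq_zero.mp this
    -- P lies on line AB and line CA, P ≠ A, contradiction
    apply hT
    have hPonCA : Collinear ℝ ({A, C, P} : Set (EuclideanSpace ℝ (Fin 2))) := by
      refine (hR.subset ?_); rw [hRPeq] at *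
      intro z hz; simp at hz ⊢; tauto
    have := meet_collinear hP hPonCA hPA
    exact this
  have hdet : (1 - p - q) * (1 - r) + p * q = 0 := by
    have h1 : t * (1 - p - q) = -(s * p) := by linarith [e1]
    have h2 : t * q = s * (1 - r) := by linarith [e2]
    have : t * ((1 - p - q) * (1 - r) + p * q) = 0 := by linear_combination (1 - r) * h1 + p * h2
    rcases mul_eq_zero.mp this with h | h
    · exact absurd h ht0
    · exact h
  -- distances
  have dPA : dist P A = |p| * dist B A := by
    rw [dist_eq_norm, dist_eq_norm, hp, norm_smul, Real.norm_eq_abs,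
      show B - A = -(A - B) by abel, norm_neg, ← dist_eq_norm, dist_comm]
  have dPB : dist P B = |1 - p| * dist B A := by
    have : P - B = (1 - p) • -(B - A) := by
      rw [show P - B = (P - A) - (B - A) by abel, hp]; module
    rw [dist_eq_norm, this, norm_smul, Real.norm_eq_abs, norm_neg,
      show B - A = -(A - B) by abel, norm_neg, ← dist_eq_norm, dist_comm]
  have dQB : dist Q B = |q| * dist C B := by
    rw [dist_eq_norm, dist_eq_norm, hq, norm_smul, Real.norm_eq_abs,
      show C - B = -(B - C) by abel, norm_neg, ← dist_eq_norm, dist_comm]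
  have dQC : dist Q C = |1 - q| * dist C B := by
    have : Q - C = (1 - q) • -(C - B) := by
      rw [show Q - C = (Q - B) - (C - B) by abel, hq]; module
    rw [dist_eq_norm, this, norm_smul, Real.norm_eq_abs, norm_neg,
      show C - B = -(B - C) by abel, norm_neg, ← dist_eq_norm, dist_comm]
  have dRC : dist R C = |r| * dist A C := by
    rw [dist_eq_norm, dist_eq_norm, hr, norm_smul, Real.norm_eq_abs,
      show A - C = -(C - A) by abel, norm_neg, ← dist_eq_norm, dist_comm]
  have dRA : dist R A = |1 - r| * dist A C := by
    have : R - A = (1 - r) • -(A - C) := by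
      rw [show R - A = (R - C) - (A - C) by abel, hr]; module
    rw [dist_eq_norm, this, norm_smul, Real.norm_eq_abs, norm_neg,
      show A - C = -(C - A) by abel, norm_neg, ← dist_eq_norm, dist_comm]
  have dAB : dist B A ≠ 0 := dist_ne_zero.mpr (Ne.symm hAB)
  have dCB : dist C B ≠ 0 := dist_ne_zero.mpr (Ne.symm hBC)
  have dACn : dist A C ≠ 0 := dist_ne_zero.mpr hAC
  rw [dPA, dPB, dQB, dQC, dRC, dRA]
  have habs : |p| * |q| * |r| = |1 - p| * |1 - q| * |1 - r| := by
    have : p * q * r = -((1 - p) * (1 - q) * (1 - r)) := by linear_combination hdet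
    calc |p| * |q| * |r| = |p * q * r| := by rw [abs_mul, abs_mul]
      _ = |(1 - p) * (1 - q) * (1 - r)| := by rw [this, abs_neg]
      _ = |1 - p| * |1 - q| * |1 - r| := by rw [abs_mul, abs_mul]
  have n1 : |1 - p| ≠ 0 := abs_ne_zero.mpr (sub_ne_zero.mpr (Ne.symm hp1))
  have n2 : |1 - q| ≠ 0 := abs_ne_zero.mpr (sub_ne_zero.mpr (Ne.symm hq1))
  have n3 : |1 - r| ≠ 0 := abs_ne_zero.mpr (sub_ne_zero.mpr (Ne.symm hr1))
  field_simp
  linear_combination habs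



theorem menelaus_quadrilateral (A1 A2 A3 A4 M1 M2 M3 M4 M : EuclideanSpace ℝ (Fin 2))
    (hT1 : ¬ Collinear ℝ ({A1, A2, A4} : Set (EuclideanSpace ℝ (Fin 2))))
    (hT2 : ¬ Collinear ℝ ({A4, A2, A3} : Set (EuclideanSpace ℝ (Fin 2))))
    (hd : Collinear ℝ ({M1, M2, M3, M4, M} : Set (EuclideanSpace ℝ (Fin 2))))
    (h1 : Collinear ℝ ({A1, A2, M1} : Set (EuclideanSpace ℝ (Fin 2))))
    (h2 : Collinear ℝ ({A2, A3, M2} : Set (EuclideanSpace ℝ (Fin 2))))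
    (h3 : Collinear ℝ ({A3, A4, M3} : Set (EuclideanSpace ℝ (Fin 2))))
    (h4 : Collinear ℝ ({A4, A1, M4} : Set (EuclideanSpace ℝ (Fin 2))))
    (hM : Collinear ℝ ({A2, A4, M} : Set (EuclideanSpace ℝ (Fin 2))))
    (hM1A1 : M1 ≠ A1) (hM1A2 : M1 ≠ A2)
    (hM2A2 : M2 ≠ A2) (hM2A3 : M2 ≠ A3)
    (hM3A3 : M3 ≠ A3) (hM3A4 : M3 ≠ A4)
    (hM4A4 : M4 ≠ A4) (hM4A1 : M4 ≠ A1)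
    (hMA2 : M ≠ A2) (hMA4 : M ≠ A4) :
    (dist M1 A1 / dist M1 A2) * (dist M2 A2 / dist M2 A3) *
      (dist M3 A3 / dist M3 A4) * (dist M4 A4 / dist M4 A1) = 1 := by
  have hline1 : Collinear ℝ ({M1, M, M4} : Set (EuclideanSpace ℝ (Fin 2))) :=
    hd.subset (by intro z hz; simp at hz ⊢; tauto)
  have hline2 : Collinear ℝ ({M2, M3, M} : Set (EuclideanSpace ℝ (Fin 2))) :=
    hd.subset (by intro z hz; simp at hz ⊢; tauto)
  have hT2' : ¬ Collinear ℝ ({A2, A3, A4} : Set (EuclideanSpace ℝ (Fin 2))) :=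
    fun h => hT2 (h.subset (by intro z hz; simp at hz ⊢; tauto))
  have hM' : Collinear ℝ ({A4, A2, M} : Set (EuclideanSpace ℝ (Fin 2))) :=
    hM.subset (by intro z hz; simp at hz ⊢; tauto)
  have E1 := menelaus_triangle A1 A2 A4 M1 M M4 hT1 h1 hM h4 hline1
    hM1A1 hM1A2 hMA2 hMA4 hM4A4 hM4A1
  have E2 := menelaus_triangle A2 A3 A4 M2 M3 M hT2' h2 h3 hM' hline2
    hM2A2 hM2A3 hM3A3 hM3A4 hMA4 hMA2
  have d2 : dist M A2 ≠ 0 := dist_ne_zero.mpr hMA2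
  have d4 : dist M A4 ≠ 0 := dist_ne_zero.mpr hMA4
  have d12 : dist M1 A2 ≠ 0 := dist_ne_zero.mpr hM1A2
  have d23 : dist M2 A3 ≠ 0 := dist_ne_zero.mpr hM2A3
  have d34 : dist M3 A4 ≠ 0 := dist_ne_zero.mpr hM3A4
  have d41 : dist M4 A1 ≠ 0 := dist_ne_zero.mpr hM4A1
  calc (dist M1 A1 / dist M1 A2) * (dist M2 A2 / dist M2 A3) *
      (dist M3 A3 / dist M3 A4) * (dist M4 A4 / dist M4 A1)
      = ((dist M1 A1 / dist M1 A2) * (dist M A2 / dist M A4) * (dist M4 A4 / dist M4 A1)) *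
        ((dist M2 A2 / dist M2 A3) * (dist M3 A3 / dist M3 A4) * (dist M A4 / dist M A2)) := by
        field_simp
    _ = 1 := by rw [E1, E2, one_mul]
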